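/- The attacked system Sa/Ga is AE-robust recoverable with respect to G_robust if and only if, for every detection state x_d ∈ X_det, the post-attack state (A, x_d) belongs to the state set of the maximally permissive supervisor S^R for G^R that is safe with respect to the resilient specification Ha and nonblocking. Consequently, synthesizing S^R simultaneously solves the verification of AE-robust recoverability and the synthesis of robust-recovery strategies. -/

import Mathlib

/-!
Common formalization of supervisory control of DES under actuator-enablement
attacks, following the natural-language context.

* A plant is a DFA with partial transition function `f : X → E → Option X`
  and initial state `x0`; `runFrom` extends `f` to strings; `Lang f x0` is the
  generated language.
* A strict subautomaton of an automaton is represented by its state set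
  `Q : Set X`, with induced transition function `subStep f Q`.
* Attacked events are modelled by the alphabet `E ⊕ E`: `Sum.inl e` is the
  ordinary event `e`, `Sum.inr e` is the attacked copy `eᵃ` (meaningful for
  `e ∈ Scv`).
* The attacked plant `gaStep`, attacked supervisor `saStep` (state `none`
  playing the role of the fresh state `A`), and their synchronous composition
  `grStep` (the attacked closed-loop system `G^R = Sa ∥ Ga`) are defined below,
  together with detection states, robust-recovery, the resilient specification
  `Ha`, supervisors for `G^R`, and resilience.
-/

open Classical List

namespace RobustRec

variable {X : Type*} {E : Type*}

/-- Extension of a partial transition function to strings. -/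
def runFrom (f : X → E → Option X) : X → List E → Option X
  | x, [] => some x
  | x, e :: w => (f x e).bind fun y => runFrom f y w

/-- Language generated from state `x0`. -/
def Lang (f : X → E → Option X) (x0 : X) : Set (List E) :=
  {w | (runFrom f x0 w).isSome}

/-- Transition function of the strict (induced) subautomaton with state set `Q`:
a transition is defined iff it is defined in the big automaton and both its
endpoints lie in `Q`. -/
noncomputable def subStep (f : X → E → Option X) (Q : Set X) : X → E → Option X :=
  fun x e => (f x e).bind fun y => if x ∈ Q ∧ y ∈ Q then some y else none

/-- Vulnerable states: those where some vulnerable controllable event is feasible. -/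
def vulnStates (f : X → E → Option X) (Scv : Set E) : Set X :=
  {x | ∃ e ∈ Scv, (f x e).isSome}

/-- A supervisor for the plant `(f, x0)`, represented by its state set `XS`
(the induced strict subautomaton): it contains `x0`, is controllable w.r.t.
the uncontrollable events `Suc`, and is safe w.r.t. the unsafe states `XUS`. -/
structure IsSupervisor (f : X → E → Option X) (x0 : X) (Suc : Set E)
    (XUS : Set X) (XS : Set X) : Prop where
  init_mem : x0 ∈ XS
  controllable : ∀ x ∈ XS, ∀ e ∈ Suc, ∀ y, f x e = some y → y ∈ XS
  safe : ∀ x ∈ XS, x ∉ XUS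

/-- The attacked plant `Ga`: all transitions of `G`, plus, for every transition
on a vulnerable event `σ ∈ Scv`, a parallel transition on its attacked copy. -/
noncomputable def gaStep (f : X → E → Option X) (Scv : Set E) :
    X → E ⊕ E → Option X
  | x, Sum.inl e => f x e
  | x, Sum.inr e => if e ∈ Scv then f x e else none

/-- The attacked supervisor `Sa`: states are `some x` for states `x` of `S`
plus the fresh state `A = none` with a self-loop on every event; for every
state `x` of `S` and `σ ∈ Scv` with `f_S(x,σ)` undefined there is a transition
on `σᵃ` from `x` to `A`. -/
noncomputable def saStep (f : X → E → Option X) (XS : Set X) (Scv : Set E) :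
    Option X → E ⊕ E → Option (Option X)
  | none, _ => some none
  | some x, Sum.inl e => (subStep f XS x e).map some
  | some x, Sum.inr e =>
      if e ∈ Scv ∧ x ∈ XS ∧ subStep f XS x e = none then some none else none

/-- Synchronous composition of two automata over a common alphabet. -/
def prodStep {X1 X2 A : Type*} (f1 : X1 → A → Option X1) (f2 : X2 → A → Option X2) :
    X1 × X2 → A → Option (X1 × X2) :=
  fun p a => (f1 p.1 a).bind fun y1 => (f2 p.2 a).map fun y2 => (y1, y2)

/-- The attacked closed-loop system `G^R = Sa ∥ Ga`. Its post-attack states are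
those of the form `(none, x)`, i.e. `(A, x)`. -/
noncomputable def grStep (f : X → E → Option X) (XS : Set X) (Scv : Set E) :
    Option X × X → E ⊕ E → Option (Option X × X) :=
  prodStep (saStep f XS Scv) (gaStep f Scv)

/-- Initial state of `G^R`. -/
def grInit (x0 : X) : Option X × X := (some x0, x0)

/-- Embedding of strings over `Σ` into strings over `Σ ∪ Σᵃ_{c,v}`. -/
def embed : List E → List (E ⊕ E) := List.map Sum.inl

/-- The language `L(Sa/Ga)` of the attacked closed-loop system. -/
noncomputable def GRLang (f : X → E → Option X) (x0 : X) (XS : Set X) (Scv : Set E) :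
    Set (List (E ⊕ E)) :=
  Lang (grStep f XS Scv) (grInit x0)

/-- The detection language `L_det = {sσ ∈ L(G) | s ∈ L(S/G), σ ∈ Σ_{c,v},
sσᵃ ∈ L(Sa/Ga)}`. -/
noncomputable def detLang (f : X → E → Option X) (x0 : X) (XS : Set X) (Scv : Set E) :
    Set (List E) :=
  {w | ∃ s σ, w = s ++ [σ] ∧ σ ∈ Scv ∧ w ∈ Lang f x0 ∧
        s ∈ Lang (subStep f XS) x0 ∧ embed s ++ [Sum.inr σ] ∈ GRLang f x0 XS Scv}

/-- The detection states `X_det = {f(x0, sσ) : sσ ∈ L_det}`. -/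
noncomputable def detStates (f : X → E → Option X) (x0 : X) (XS : Set X) (Scv : Set E) :
    Set X :=
  {x | ∃ w ∈ detLang f x0 XS Scv, runFrom f x0 w = some x}

/-- `r` is a robust-recovery strategy from `x` relative to the candidate set `R`
of recoverable states, the robust region `XR` and the bad states
`Bad = X_v ∪ X_US`: (1) `r` leads into `XR`; (2) no prefix of `r` visits `Bad`;
(3) no prefix of `r` can uncontrollably reach `Bad`; (4) any one-step
uncontrollable deviation from `r` lands in `R`. -/
def IsRecoveryPath (f : X → E → Option X) (Suc : Set E) (XR Bad : Set X)
    (R : Set X) (x : X) (r : List E) : Prop :=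
  (∃ y ∈ XR, runFrom f x r = some y) ∧
  (∀ t, t <+: r → ∀ y, runFrom f x t = some y → y ∉ Bad) ∧
  (∀ t, t <+: r → ∀ u : List E, (∀ e ∈ u, e ∈ Suc) →
      ∀ y, runFrom f x (t ++ u) = some y → y ∉ Bad) ∧
  (∀ t, t <+: r → ∀ e ∈ Suc, ∀ y, runFrom f x (t ++ [e]) = some y →
      ¬ (t ++ [e]) <+: r → y ∈ R)

/-- The set `R` of AE-robust recoverable states: the largest subset of
`X \ Bad` each of whose elements admits a robust-recovery strategy (relative
to the set itself). -/
def recSet (f : X → E → Option X) (Suc : Set E) (XR Bad : Set X) : Set X :=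
  ⋃₀ {R | R ⊆ Badᶜ ∧ ∀ x ∈ R, ∃ r, IsRecoveryPath f Suc XR Bad R x r}

/-- The attacked system `Sa/Ga` is AE-robust recoverable w.r.t. the robust
region `XR` if every detection state is AE-robust recoverable. -/
noncomputable def AERobustRecoverable (f : X → E → Option X) (x0 : X)
    (Suc Scv : Set E) (XUS XS XR : Set X) : Prop :=
  detStates f x0 XS Scv ⊆ recSet f Suc XR (vulnStates f Scv ∪ XUS)

/-- Reachable states of `G^R` (the state set of the synchronous composition). -/
noncomputable def grStates (f : X → E → Option X) (x0 : X) (XS : Set X) (Scv : Set E) :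
    Set (Option X × X) :=
  {p | ∃ w, runFrom (grStep f XS Scv) (grInit x0) w = some p}

/-- A supervisor for `G^R`, represented by its state set `Q` (inducing a strict
subautomaton of `G^R`): it contains the initial state and is controllable
w.r.t. `Suc` (attacked events being controllable). -/
structure IsGRSupervisor (f : X → E → Option X) (x0 : X) (Suc Scv : Set E)
    (XS : Set X) (Q : Set (Option X × X)) : Prop where
  subset : Q ⊆ grStates f x0 XS Scv
  init_mem : grInit x0 ∈ Q
  controllable : ∀ p ∈ Q, ∀ e ∈ Suc, ∀ q, grStep f XS Scv p (Sum.inl e) = some q → q ∈ Q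

/-- State set of the resilient specification `Ha`: `G^R` minus every post-attack
state `(A, x)` with `x ∈ X_v ∪ X_US`. -/
def haCarrier (f : X → E → Option X) (Scv : Set E) (XUS : Set X) :
    Set (Option X × X) :=
  {p | ¬ (p.1 = none ∧ p.2 ∈ vulnStates f Scv ∪ XUS)}

/-- Marked states of `Ha`: post-attack states `(A, x)` with `x` in the robust
region. -/
def haMarked (XR : Set X) : Set (Option X × X) :=
  {p | p.1 = (none : Option X) ∧ p.2 ∈ XR}

/-- The closed-loop language `L(S^R/G^R) = L(S^R)` of a supervisor `Q` for `G^R`. -/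
noncomputable def SRLang (f : X → E → Option X) (x0 : X) (XS : Set X) (Scv : Set E)
    (Q : Set (Option X × X)) : Set (List (E ⊕ E)) :=
  Lang (subStep (grStep f XS Scv) Q) (grInit x0)

/-- `S^R` is safe w.r.t. the resilient specification `Ha`: `L(S^R) ⊆ L(Ha)`. -/
noncomputable def SafeWrtHa (f : X → E → Option X) (x0 : X) (XS : Set X)
    (Scv : Set E) (XUS : Set X) (Q : Set (Option X × X)) : Prop :=
  SRLang f x0 XS Scv Q ⊆
    Lang (subStep (grStep f XS Scv) (haCarrier f Scv XUS)) (grInit x0)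

/-- `S^R` is nonblocking: from every post-attack state of `S^R`, a marked state
of `Ha` is reachable within `S^R`. -/
noncomputable def NonblockingSR (f : X → E → Option X) (XS : Set X) (Scv : Set E)
    (XR : Set X) (Q : Set (Option X × X)) : Prop :=
  ∀ p ∈ Q, p.1 = (none : Option X) →
    ∃ w q, runFrom (subStep (grStep f XS Scv) Q) p w = some q ∧ q ∈ haMarked XR

/-- `S^R` is maximally permissive among safe nonblocking supervisors for `G^R`. -/
noncomputable def MaxPermissive (f : X → E → Option X) (x0 : X) (Suc Scv : Set E)
    (XS XUS XR : Set X) (Q : Set (Option X × X)) : Prop :=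
  ∀ Q', IsGRSupervisor f x0 Suc Scv XS Q' → SafeWrtHa f x0 XS Scv XUS Q' →
    NonblockingSR f XS Scv XR Q' → SRLang f x0 XS Scv Q' ⊆ SRLang f x0 XS Scv Q

/-- `S^R` (given by its state set `Q`) is resilient w.r.t. `Scv` and the robust
region `XR`: it permits the full nominal behavior `L(S/G)`, and after any
AE-attack `sσᵃ` feasible in `L(Sa/Ga)` it permits the attack, keeps all its
subsequent behavior out of `Bad = X_v ∪ X_US`, and can always be extended
within `L(S^R)` to reach a post-attack state `(A, x)` with `x ∈ XR`; i.e. it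
enforces a robust-recovery strategy from the detection state. -/
noncomputable def ResilientSup (f : X → E → Option X) (x0 : X) (Scv : Set E)
    (XS XR Bad : Set X) (Q : Set (Option X × X)) : Prop :=
  (∀ s ∈ Lang (subStep f XS) x0, embed s ∈ SRLang f x0 XS Scv Q) ∧
  ∀ s : List E, embed s ∈ SRLang f x0 XS Scv Q →
    ∀ σ ∈ Scv, embed s ++ [Sum.inr σ] ∈ GRLang f x0 XS Scv →
      embed s ++ [Sum.inr σ] ∈ SRLang f x0 XS Scv Q ∧
      ∀ t : List E, embed s ++ [Sum.inr σ] ++ embed t ∈ SRLang f x0 XS Scv Q →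
        (∀ t', t' <+: t → ∀ y, runFrom f x0 (s ++ σ :: t') = some y →
            y ∉ Bad) ∧
        ∃ u q, runFrom (subStep (grStep f XS Scv) Q) (grInit x0)
                 (embed s ++ [Sum.inr σ] ++ embed t ++ u) = some q ∧
               q.1 = (none : Option X) ∧ q.2 ∈ XR

/-- A prefix-closed language. -/
def PrefixClosed (K : Set (List E)) : Prop := ∀ s t : List E, s ++ t ∈ K → s ∈ K

/-- `K` is controllable w.r.t. the language `M` and uncontrollable events `Suc`. -/
def ControllableLang (K M : Set (List E)) (Suc : Set E) : Prop :=
  ∀ s ∈ K, ∀ e ∈ Suc, s ++ [e] ∈ M → s ++ [e] ∈ K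

/-- The supremal controllable (prefix-closed) sublanguage of `M` w.r.t. `LG`. -/
def supC (M LG : Set (List E)) (Suc : Set E) : Set (List E) :=
  ⋃₀ {K | K ⊆ M ∧ PrefixClosed K ∧ ControllableLang K LG Suc}

end RobustRec
namespace RobustRec

variable {X : Type*} {E : Type*}

theorem runFrom_nil (f : X → E → Option X) (x : X) : runFrom f x [] = some x := rfl

theorem runFrom_cons (f : X → E → Option X) (x : X) (e : E) (w : List E) :
    runFrom f x (e :: w) = (f x e).bind fun y => runFrom f y w := rfl

theorem runFrom_one (f : X → E → Option X) (x : X) (e : E) :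
    runFrom f x [e] = f x e := by
  cases h : f x e <;> simp [runFrom_cons, runFrom_nil, h]

theorem runFrom_append (f : X → E → Option X) (x : X) (s t : List E) :
    runFrom f x (s ++ t) = (runFrom f x s).bind fun y => runFrom f y t := by
  induction s generalizing x with
  | nil => simp [runFrom_nil]
  | cons e s ih => cases h : f x e <;> simp [runFrom_cons, h, ih]

theorem run_prefix {f : X → E → Option X} {x q : X} {a b : List E}
    (h : runFrom f x (a ++ b) = some q) :
    ∃ m, runFrom f x a = some m ∧ runFrom f m b = some q := by
  rw [runFrom_append] at h
  cases hm : runFrom f x a with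
  | none => rw [hm] at h; simp at h
  | some m => rw [hm] at h; exact ⟨m, rfl, h⟩

theorem subStep_some {f : X → E → Option X} {Q : Set X} {x y : X} {e : E}
    (h : subStep f Q x e = some y) : f x e = some y ∧ x ∈ Q ∧ y ∈ Q := by
  unfold subStep at h
  cases hf : f x e with
  | none => rw [hf] at h; simp at h
  | some z =>
      rw [hf] at h
      simp only [Option.bind_some] at h
      split at h
      · rename_i hc
        obtain rfl : z = y := Option.some.inj h
        exact ⟨rfl, hc⟩
      · simp at h

theorem subStep_eq {f : X → E → Option X} {Q : Set X} {x y : X} {e : E}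
    (hf : f x e = some y) (hx : x ∈ Q) (hy : y ∈ Q) : subStep f Q x e = some y := by
  unfold subStep; rw [hf]; simp [hx, hy]

theorem runFrom_subStep_some {f : X → E → Option X} {Q : Set X} {x y : X} {w : List E}
    (h : runFrom (subStep f Q) x w = some y) : runFrom f x w = some y := by
  induction w generalizing x with
  | nil => exact h
  | cons e w ih =>
      rw [runFrom_cons] at h ⊢
      cases hs : subStep f Q x e with
      | none => rw [hs] at h; simp at h
      | some z =>
          rw [hs] at h
          simp only [Option.bind_some] at h
          rw [(subStep_some hs).1, Option.bind_some]
          exact ih h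

theorem runFrom_subStep_mem {f : X → E → Option X} {Q : Set X} {x y : X} {w : List E}
    (h : runFrom (subStep f Q) x w = some y) : y ∈ Q ∨ y = x := by
  induction w generalizing x with
  | nil => right; exact (Option.some.inj h).symm
  | cons e w ih =>
      rw [runFrom_cons] at h
      cases hs : subStep f Q x e with
      | none => rw [hs] at h; simp at h
      | some z =>
          rw [hs] at h
          simp only [Option.bind_some] at h
          rcases ih h with hq | rfl
          · exact Or.inl hq
          · exact Or.inl (subStep_some hs).2.2

theorem runFrom_subStep_mono {f : X → E → Option X} {Q1 Q2 : Set X} (hQ : Q1 ⊆ Q2)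
    {x y : X} {w : List E} (h : runFrom (subStep f Q1) x w = some y) :
    runFrom (subStep f Q2) x w = some y := by
  induction w generalizing x with
  | nil => exact h
  | cons e w ih =>
      rw [runFrom_cons] at h ⊢
      cases hs : subStep f Q1 x e with
      | none => rw [hs] at h; simp at h
      | some z =>
          rw [hs] at h
          simp only [Option.bind_some] at h
          obtain ⟨hf, hx, hz⟩ := subStep_some hs
          rw [subStep_eq hf (hQ hx) (hQ hz), Option.bind_some]
          exact ih h

theorem runFrom_subStep_build {f : X → E → Option X} {Q : Set X} {x y : X} {w : List E}
    (h : runFrom f x w = some y)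
    (hall : ∀ t z, t <+: w → runFrom f x t = some z → z ∈ Q) :
    runFrom (subStep f Q) x w = some y := by
  induction w generalizing x with
  | nil => exact h
  | cons e w ih =>
      rw [runFrom_cons] at h
      cases hf : f x e with
      | none => rw [hf] at h; simp at h
      | some z =>
          rw [hf] at h
          simp only [Option.bind_some] at h
          have hx : x ∈ Q := hall [] x ⟨e :: w, rfl⟩ rfl
          have hz : z ∈ Q := hall [e] z ⟨w, rfl⟩ (by rw [runFrom_one, hf])
          rw [runFrom_cons, subStep_eq hf hx hz, Option.bind_some]
          refine ih h fun t z' ht hr => hall (e :: t) z' ?_ ?_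
          · exact List.cons_prefix_cons.mpr ⟨rfl, ht⟩
          · rw [runFrom_cons, hf, Option.bind_some]; exact hr

theorem prefix_map {α β : Type*} {g : α → β} {t : List β} {l : List α}
    (h : t <+: List.map g l) : ∃ t', t' <+: l ∧ t = List.map g t' := by
  refine ⟨l.take t.length, List.take_prefix _ _, ?_⟩
  rw [List.map_take]
  exact List.prefix_iff_eq_take.mp h

theorem prefix_concat {α : Type*} {t w : List α} {a : α} (h : t <+: w ++ [a]) :
    t <+: w ∨ t = w ++ [a] := by
  obtain ⟨u, hu⟩ := h
  rcases List.eq_nil_or_concat u with rfl | ⟨u', b, rfl⟩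
  · right; rw [List.append_nil] at hu; exact hu
  · left
    have h2 : (t ++ u') ++ [b] = w ++ [a] := by simpa [List.append_assoc] using hu
    exact ⟨u', (List.append_inj' h2 rfl).1⟩

theorem saStep_none (f : X → E → Option X) (XS : Set X) (Scv : Set E) (a : E ⊕ E) :
    saStep f XS Scv none a = some none := rfl

theorem gaStep_inl (f : X → E → Option X) (Scv : Set E) (x : X) (e : E) :
    gaStep f Scv x (Sum.inl e) = f x e := rfl

theorem gaStep_some {f : X → E → Option X} {Scv : Set E} {x y : X} {a : E ⊕ E}
    (h : gaStep f Scv x a = some y) : f x (Sum.elim id id a) = some y := by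
  cases a with
  | inl e => exact h
  | inr e =>
      simp only [gaStep] at h
      split at h
      · exact h
      · simp at h

theorem grStep_post (f : X → E → Option X) (XS : Set X) (Scv : Set E) (x : X) (a : E ⊕ E) :
    grStep f XS Scv (none, x) a
      = (gaStep f Scv x a).map (fun y => ((none : Option X), y)) := by
  cases h : gaStep f Scv x a <;>
    simp [grStep, prodStep, saStep_none, h]

theorem grStep_pre_inl (f : X → E → Option X) (XS : Set X) (Scv : Set E) (x : X) (e : E) :
    grStep f XS Scv (some x, x) (Sum.inl e)
      = (subStep f XS x e).map (fun y => ((some y : Option X), y)) := by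
  cases hs : subStep f XS x e with
  | none => simp [grStep, prodStep, saStep, hs]
  | some y =>
      have hf := (subStep_some hs).1
      simp [grStep, prodStep, saStep, hs, hf, gaStep_inl]

theorem grStep_pre_inr {f : X → E → Option X} {XS : Set X} {Scv : Set E}
    {x : X} {s : E} {p : Option X × X}
    (h : grStep f XS Scv (some x, x) (Sum.inr s) = some p) :
    p.1 = none ∧ f x s = some p.2 := by
  simp only [grStep, prodStep, saStep, gaStep] at h
  split at h
  · simp only [Option.bind_some] at h
    split at h
    · cases hf : f x s with
      | none => rw [hf] at h; simp at h
      | some y =>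
          rw [hf] at h
          simp only [Option.map_some] at h
          obtain rfl := Option.some.inj h
          exact ⟨rfl, rfl⟩
    · simp at h
  · simp at h

theorem runFrom_grStep_embed {f : X → E → Option X} {XS : Set X} (Scv : Set E)
    {x y : X} {s : List E} (h : runFrom (subStep f XS) x s = some y) :
    runFrom (grStep f XS Scv) (some x, x) (embed s) = some (some y, y) := by
  induction s generalizing x with
  | nil => obtain rfl := Option.some.inj h; rfl
  | cons e s ih =>
      rw [runFrom_cons] at h
      cases hs : subStep f XS x e with
      | none => rw [hs] at h; simp at h
      | some z =>
          rw [hs] at h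
          simp only [Option.bind_some] at h
          show runFrom (grStep f XS Scv) (some x, x) (Sum.inl e :: embed s) = _
          rw [runFrom_cons, grStep_pre_inl, hs, Option.map_some, Option.bind_some]
          exact ih h

theorem runFrom_grStep_post_of {f : X → E → Option X} {XS : Set X} {Scv : Set E}
    {x y : X} {r : List E} (h : runFrom f x r = some y) :
    runFrom (grStep f XS Scv) ((none : Option X), x) (embed r) = some (none, y) := by
  induction r generalizing x with
  | nil => obtain rfl := Option.some.inj h; rfl
  | cons e r ih =>
      rw [runFrom_cons] at h
      cases hf : f x e with
      | none => rw [hf] at h; simp at h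
      | some z =>
          rw [hf] at h
          simp only [Option.bind_some] at h
          show runFrom (grStep f XS Scv) (none, x) (Sum.inl e :: embed r) = _
          rw [runFrom_cons, grStep_post, gaStep_inl, hf, Option.map_some, Option.bind_some]
          exact ih h

theorem runFrom_grStep_post' {f : X → E → Option X} {XS : Set X} {Scv : Set E}
    {x : X} {w : List (E ⊕ E)} {p : Option X × X}
    (h : runFrom (grStep f XS Scv) ((none : Option X), x) w = some p) :
    p.1 = none ∧ runFrom f x (w.map (Sum.elim id id)) = some p.2 := by
  induction w generalizing x with
  | nil =>
      obtain rfl : ((none : Option X), x) = p := Option.some.inj h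
      exact ⟨rfl, rfl⟩
  | cons a w ih =>
      rw [runFrom_cons] at h
      cases hg : grStep f XS Scv (none, x) a with
      | none => rw [hg] at h; simp at h
      | some q =>
          rw [hg] at h
          simp only [Option.bind_some] at h
          rw [grStep_post] at hg
          obtain ⟨z, hz, rfl⟩ := Option.map_eq_some_iff.mp hg
          have hrest := ih h
          refine ⟨hrest.1, ?_⟩
          rw [List.map_cons, runFrom_cons, gaStep_some hz, Option.bind_some]
          exact hrest.2

theorem grStates_run {f : X → E → Option X} {x0 : X} {XS : Set X} {Scv : Set E}
    {p q : Option X × X} {w : List (E ⊕ E)}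
    (hp : p ∈ grStates f x0 XS Scv) (h : runFrom (grStep f XS Scv) p w = some q) :
    q ∈ grStates f x0 XS Scv := by
  obtain ⟨w0, h0⟩ := hp
  exact ⟨w0 ++ w, by rw [runFrom_append, h0, Option.bind_some]; exact h⟩

theorem isRecoveryPath_mono {f : X → E → Option X} {Suc : Set E} {XR Bad R R' : Set X}
    (h : R ⊆ R') {x : X} {r : List E} (hp : IsRecoveryPath f Suc XR Bad R x r) :
    IsRecoveryPath f Suc XR Bad R' x r :=
  ⟨hp.1, hp.2.1, hp.2.2.1, fun t ht e he y hy hne => h (hp.2.2.2 t ht e he y hy hne)⟩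

theorem recSet_subset_compl {f : X → E → Option X} {Suc : Set E} {XR Bad : Set X} :
    recSet f Suc XR Bad ⊆ Badᶜ := by
  rintro x ⟨R, ⟨hR1, _⟩, hx⟩; exact hR1 hx

theorem mem_recSet {f : X → E → Option X} {Suc : Set E} {XR Bad R : Set X}
    (h1 : R ⊆ Badᶜ) (h2 : ∀ x ∈ R, ∃ r, IsRecoveryPath f Suc XR Bad R x r) :
    R ⊆ recSet f Suc XR Bad :=
  fun x hx => ⟨R, ⟨h1, h2⟩, hx⟩

theorem recSet_path {f : X → E → Option X} {Suc : Set E} {XR Bad : Set X} {x : X}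
    (hx : x ∈ recSet f Suc XR Bad) :
    ∃ r, IsRecoveryPath f Suc XR Bad (recSet f Suc XR Bad) x r := by
  obtain ⟨R, ⟨hR1, hR2⟩, hxR⟩ := hx
  obtain ⟨r, hr⟩ := hR2 x hxR
  exact ⟨r, isRecoveryPath_mono (mem_recSet hR1 hR2) hr⟩

theorem recSet_mid {f : X → E → Option X} {Suc : Set E} {XR Bad : Set X}
    {x : X} {r t : List E} {z : X}
    (hp : IsRecoveryPath f Suc XR Bad (recSet f Suc XR Bad) x r)
    (ht : t <+: r) (hz : runFrom f x t = some z) : z ∈ recSet f Suc XR Bad := by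
  set RS := recSet f Suc XR Bad with hRS
  set M : Set X := {z | ∃ x r, IsRecoveryPath f Suc XR Bad RS x r ∧
      ∃ t, t <+: r ∧ runFrom f x t = some z} with hM
  have hsub : RS ∪ M ⊆ recSet f Suc XR Bad := by
    apply mem_recSet
    · rintro y (hy | ⟨x', r', hp', t', ht', hz'⟩)
      · exact recSet_subset_compl hy
      · exact hp'.2.1 t' ht' y hz'
    · rintro y (hy | ⟨x', r', hp', t', ht', hz'⟩)
      · obtain ⟨r', hr'⟩ := recSet_path hy
        exact ⟨r', isRecoveryPath_mono Set.subset_union_left hr'⟩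
      · obtain ⟨t2, rfl⟩ := ht'
        refine ⟨t2, ?_, ?_, ?_, ?_⟩
        · obtain ⟨yend, hyXR, hrun⟩ := hp'.1
          refine ⟨yend, hyXR, ?_⟩
          rw [runFrom_append, hz', Option.bind_some] at hrun
          exact hrun
        · intro u hu w hw
          refine hp'.2.1 (t' ++ u) ((List.prefix_append_right_inj t').mpr hu) w ?_
          rw [runFrom_append, hz', Option.bind_some]
          exact hw
        · intro u hu v hv w hw
          refine hp'.2.2.1 (t' ++ u) ((List.prefix_append_right_inj t').mpr hu) v hv w ?_
          rw [List.append_assoc, runFrom_append, hz', Option.bind_some]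
          exact hw
        · intro u hu e he w hw hne
          refine Or.inl (hp'.2.2.2 (t' ++ u) ((List.prefix_append_right_inj t').mpr hu)
            e he w ?_ ?_)
          · rw [List.append_assoc, runFrom_append, hz', Option.bind_some]
            exact hw
          · rw [List.append_assoc]
            intro hcon
            exact hne ((List.prefix_append_right_inj t').mp hcon)
  exact hsub (Or.inr ⟨x, r, hp, t, ht, hz⟩)

theorem recSet_uc {f : X → E → Option X} {Suc : Set E} {XR Bad : Set X} {x y : X} {e : E}
    (hx : x ∈ recSet f Suc XR Bad) (he : e ∈ Suc) (hy : f x e = some y) :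
    y ∈ recSet f Suc XR Bad := by
  obtain ⟨r, hp⟩ := recSet_path hx
  by_cases hpre : [e] <+: r
  · exact recSet_mid hp hpre (by rw [runFrom_one]; exact hy)
  · refine hp.2.2.2 [] List.nil_prefix e he y ?_ (by simpa using hpre)
    rw [List.nil_append, runFrom_one]; exact hy

theorem srlang_run {f : X → E → Option X} {x0 : X} {XS : Set X} {Scv : Set E}
    {Q : Set (Option X × X)} {w : List (E ⊕ E)} {p : Option X × X}
    (hw : w ∈ SRLang f x0 XS Scv Q)
    (hp : runFrom (grStep f XS Scv) (grInit x0) w = some p) :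
    runFrom (subStep (grStep f XS Scv) Q) (grInit x0) w = some p ∧ (p ∈ Q ∨ p = grInit x0) := by
  obtain ⟨q, hq⟩ := Option.isSome_iff_exists.mp hw
  have h2 := runFrom_subStep_some hq
  rw [hp] at h2
  obtain rfl := Option.some.inj h2
  exact ⟨hq, runFrom_subStep_mem hq⟩

/-- The pre-attack region: all states of `G^R` reachable along nominal
supervised behavior. -/
noncomputable def preQ (f : X → E → Option X) (XS : Set X) (x0 : X) : Set (Option X × X) :=
  {p | ∃ z, (∃ s, runFrom (subStep f XS) x0 s = some z) ∧ p = ((some z : Option X), z)}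

theorem preQ_sub (f : X → E → Option X) (XS : Set X) (x0 : X) (Scv : Set E) :
    preQ f XS x0 ⊆ grStates f x0 XS Scv := by
  rintro p ⟨z, ⟨s, hs⟩, rfl⟩
  exact ⟨embed s, runFrom_grStep_embed Scv hs⟩

theorem preQ_sup (f : X → E → Option X) (x0 : X) (Suc Scv : Set E) (XS : Set X) :
    IsGRSupervisor f x0 Suc Scv XS (preQ f XS x0) := by
  refine ⟨preQ_sub f XS x0 Scv, ⟨x0, ⟨[], rfl⟩, rfl⟩, ?_⟩
  rintro p ⟨z, ⟨s, hs⟩, rfl⟩ e he q hq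
  rw [grStep_pre_inl] at hq
  obtain ⟨y, hy, rfl⟩ := Option.map_eq_some_iff.mp hq
  exact ⟨y, ⟨s ++ [e], by rw [runFrom_append, hs, Option.bind_some, runFrom_one]; exact hy⟩, rfl⟩

theorem preQ_safe (f : X → E → Option X) (x0 : X) (XS : Set X) (Scv : Set E) (XUS : Set X) :
    SafeWrtHa f x0 XS Scv XUS (preQ f XS x0) := by
  intro w hw
  obtain ⟨q, hq⟩ := Option.isSome_iff_exists.mp hw
  refine Option.isSome_iff_exists.mpr ⟨q, runFrom_subStep_mono ?_ hq⟩
  rintro p ⟨z, _, rfl⟩ ⟨hc, -⟩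
  simp at hc

theorem preQ_nb (f : X → E → Option X) (x0 : X) (XS : Set X) (Scv : Set E) (XR : Set X) :
    NonblockingSR f XS Scv XR (preQ f XS x0) := by
  rintro p ⟨z, _, rfl⟩ hc
  simp at hc

theorem preQ_lang {f : X → E → Option X} {XS : Set X} {x0 : X} (Scv : Set E)
    {s : List E} {xn : X} (hxn : runFrom (subStep f XS) x0 s = some xn) :
    runFrom (subStep (grStep f XS Scv) (preQ f XS x0)) (grInit x0) (embed s)
      = some (some xn, xn) := by
  refine runFrom_subStep_build (runFrom_grStep_embed Scv hxn) ?_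
  intro t p ht hp
  obtain ⟨t', ht', rfl⟩ := prefix_map (show t <+: List.map Sum.inl s from ht)
  obtain ⟨t2, rfl⟩ := ht'
  obtain ⟨m, hm, -⟩ := run_prefix hxn
  have hgm : runFrom (grStep f XS Scv) (grInit x0) (List.map Sum.inl t') = some (some m, m) :=
    runFrom_grStep_embed Scv hm
  rw [hgm] at hp
  obtain rfl := Option.some.inj hp
  exact ⟨m, ⟨t', hm⟩, rfl⟩

/-- Decomposition of a detection state: witness string, vulnerable event,
pre-attack state, and the corresponding run in `G^R`. -/
theorem det_decomp {f : X → E → Option X} {x0 : X} {XS : Set X} {Scv : Set E} {x : X}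
    (hx : x ∈ detStates f x0 XS Scv) :
    ∃ (s : List E) (σ : E) (xn : X),
      runFrom (subStep f XS) x0 s = some xn ∧
      grStep f XS Scv (some xn, xn) (Sum.inr σ) = some ((none : Option X), x) ∧
      runFrom (grStep f XS Scv) (grInit x0) (embed s ++ [Sum.inr σ])
        = some ((none : Option X), x) := by
  obtain ⟨w, ⟨s, σ, rfl, hσ, hwL, hsL, hGR⟩, hrun⟩ := hx
  obtain ⟨xn, hxn⟩ := Option.isSome_iff_exists.mp hsL
  obtain ⟨p, hp⟩ := Option.isSome_iff_exists.mp hGR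
  have hemb : runFrom (grStep f XS Scv) (grInit x0) (embed s) = some (some xn, xn) :=
    runFrom_grStep_embed Scv hxn
  obtain ⟨m, hm1, hm2⟩ := run_prefix hp
  rw [hemb] at hm1
  obtain rfl := Option.some.inj hm1
  rw [runFrom_one] at hm2
  obtain ⟨m2, hm21, hm22⟩ := run_prefix hrun
  have hfs : runFrom f x0 s = some xn := runFrom_subStep_some hxn
  rw [hfs] at hm21
  obtain rfl := Option.some.inj hm21
  rw [runFrom_one] at hm22
  have hpr := grStep_pre_inr hm2
  obtain ⟨p1, p2⟩ := p
  obtain ⟨rfl, hfp⟩ := hpr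
  rw [hm22] at hfp
  obtain rfl := Option.some.inj hfp
  exact ⟨s, σ, xn, hxn, hm2, hp⟩

end RobustRec
/-- The attacked system `Sa/Ga` is AE-robust recoverable w.r.t.
`G_robust` iff, for every detection state `x_d ∈ X_det`, the post-attack state
`(A, x_d)` belongs to the state set of the maximally permissive supervisor `S^R`
for `G^R` that is safe w.r.t. the resilient specification `Ha` and nonblocking.
Hence synthesizing `S^R` solves both the verification of AE-robust
recoverability and the synthesis of robust-recovery strategies. -/
theorem RobustRec.AERobustRecoverable_iff_detStates_mem_maxPermissive
    {X E : Type*} [Fintype X] [Fintype E]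
    (f : X → E → Option X) (x0 : X) (Sc Suc Scv : Set E) (XUS XS XR : Set X)
    (hdisj : Sc ∩ Suc = ∅) (hcover : Sc ∪ Suc = Set.univ) (hScv : Scv ⊆ Sc)
    (hS : IsSupervisor f x0 Suc XUS XS)
    (hXR : XR ∩ (vulnStates f Scv ∪ XUS) = ∅)
    (Q : Set (Option X × X))
    (hQ : IsGRSupervisor f x0 Suc Scv XS Q)
    (hsafe : SafeWrtHa f x0 XS Scv XUS Q)
    (hnb : NonblockingSR f XS Scv XR Q)
    (hmax : MaxPermissive f x0 Suc Scv XS XUS XR Q) :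
    AERobustRecoverable f x0 Suc Scv XUS XS XR ↔
      ∀ x ∈ detStates f x0 XS Scv, ((none : Option X), x) ∈ Q := by
  classical
  -- `hQlang`: every nominal supervised string is permitted by `Q`, and the
  -- corresponding pre-attack state belongs to `Q`.
  have hQlang : ∀ (s : List E) (xn : X), runFrom (subStep f XS) x0 s = some xn →
      runFrom (subStep (grStep f XS Scv) Q) (grInit x0) (embed s) = some (some xn, xn) ∧
      ((some xn : Option X), xn) ∈ Q := by
    intro s xn hxn
    have hpre : embed s ∈ SRLang f x0 XS Scv (preQ f XS x0) :=
      Option.isSome_iff_exists.mpr ⟨_, preQ_lang Scv hxn⟩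
    have hQs : embed s ∈ SRLang f x0 XS Scv Q :=
      hmax (preQ f XS x0) (preQ_sup f x0 Suc Scv XS) (preQ_safe f x0 XS Scv XUS)
        (preQ_nb f x0 XS Scv XR) hpre
    obtain ⟨hrunQ, hmem⟩ := srlang_run hQs (runFrom_grStep_embed Scv hxn)
    refine ⟨hrunQ, ?_⟩
    rcases hmem with h | h
    · exact h
    · rw [h]; exact hQ.init_mem
  constructor
  · -- AE-robust recoverability ⇒ detection states in `Q`.
    intro hrec x hx
    have hrec' : detStates f x0 XS Scv ⊆ recSet f Suc XR (vulnStates f Scv ∪ XUS) := hrec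
    obtain ⟨s, σ, xn, hxn, hstep, hfull⟩ := det_decomp hx
    -- the candidate supervisor: nominal behavior plus the recoverable
    -- post-attack region
    set Q' : Set (Option X × X) := preQ f XS x0 ∪
        {p | p.1 = none ∧ p.2 ∈ recSet f Suc XR (vulnStates f Scv ∪ XUS) ∧
          p ∈ grStates f x0 XS Scv} with hQ'def
    have hsup' : IsGRSupervisor f x0 Suc Scv XS Q' := by
      refine ⟨?_, Or.inl ⟨x0, ⟨[], rfl⟩, rfl⟩, ?_⟩
      · rintro p (hp | ⟨-, -, h3⟩)
        · exact preQ_sub f XS x0 Scv hp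
        · exact h3
      · rintro p (hp | ⟨h1, h2, h3⟩) e he q hq
        · obtain ⟨z, ⟨s', hs'⟩, rfl⟩ := hp
          rw [grStep_pre_inl] at hq
          obtain ⟨y, hy, rfl⟩ := Option.map_eq_some_iff.mp hq
          refine Or.inl ⟨y, ⟨s' ++ [e], ?_⟩, rfl⟩
          rw [runFrom_append, hs', Option.bind_some, runFrom_one]; exact hy
        · obtain ⟨p1, p2⟩ := p
          obtain rfl : p1 = none := h1
          rw [grStep_post] at hq
          obtain ⟨y, hy, rfl⟩ := Option.map_eq_some_iff.mp hq
          have hf : f p2 e = some y := hy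
          refine Or.inr ⟨rfl, recSet_uc h2 he hf, ?_⟩
          refine grStates_run h3 (w := [Sum.inl e]) ?_
          rw [runFrom_one, grStep_post, gaStep_inl, hf]; rfl
    have hsafe' : SafeWrtHa f x0 XS Scv XUS Q' := by
      intro w hw
      obtain ⟨q, hq⟩ := Option.isSome_iff_exists.mp hw
      refine Option.isSome_iff_exists.mpr ⟨q, runFrom_subStep_mono ?_ hq⟩
      rintro p (hp | ⟨h1, h2, -⟩)
      · obtain ⟨z, -, rfl⟩ := hp
        rintro ⟨hc, -⟩
        simp at hc
      · rintro ⟨-, hbad⟩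
        exact recSet_subset_compl h2 hbad
    have hnb' : NonblockingSR f XS Scv XR Q' := by
      rintro p (hp | ⟨h1, h2, h3⟩) hpnone
      · obtain ⟨z, -, rfl⟩ := hp
        simp at hpnone
      · obtain ⟨p1, p2⟩ := p
        obtain rfl : p1 = none := h1
        obtain ⟨r, hpath⟩ := recSet_path h2
        obtain ⟨yend, hyXR, hrun⟩ := hpath.1
        refine ⟨embed r, ((none : Option X), yend), ?_, rfl, hyXR⟩
        refine runFrom_subStep_build (runFrom_grStep_post_of hrun) ?_
        intro t pq ht hpq
        obtain ⟨t', ht', rfl⟩ := prefix_map (show t <+: List.map Sum.inl r from ht)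
        obtain ⟨t2, rfl⟩ := ht'
        obtain ⟨m, hm, -⟩ := run_prefix hrun
        have hgm : runFrom (grStep f XS Scv) ((none : Option X), p2) (List.map Sum.inl t')
            = some ((none : Option X), m) := runFrom_grStep_post_of hm
        rw [hgm] at hpq
        obtain rfl := Option.some.inj hpq
        exact Or.inr ⟨rfl, recSet_mid hpath ⟨t2, rfl⟩ hm, grStates_run h3 hgm⟩
    have hmem : embed s ++ [Sum.inr σ] ∈ SRLang f x0 XS Scv Q' := by
      refine Option.isSome_iff_exists.mpr ⟨((none : Option X), x), ?_⟩
      refine runFrom_subStep_build hfull ?_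
      intro t p ht hp
      rcases prefix_concat ht with htw | rfl
      · obtain ⟨t', ht', rfl⟩ := prefix_map (show t <+: List.map Sum.inl s from htw)
        obtain ⟨t2, rfl⟩ := ht'
        obtain ⟨m, hm, -⟩ := run_prefix hxn
        have hgm : runFrom (grStep f XS Scv) (grInit x0) (List.map Sum.inl t')
            = some (some m, m) := runFrom_grStep_embed Scv hm
        rw [hgm] at hp
        obtain rfl := Option.some.inj hp
        exact Or.inl ⟨m, ⟨t', hm⟩, rfl⟩
      · rw [hfull] at hp
        obtain rfl := Option.some.inj hp
        exact Or.inr ⟨rfl, hrec' hx, ⟨embed s ++ [Sum.inr σ], hfull⟩⟩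
    have hQfin := hmax Q' hsup' hsafe' hnb' hmem
    obtain ⟨-, hmemQ⟩ := srlang_run hQfin hfull
    rcases hmemQ with h | h
    · exact h
    · simp [grInit, Prod.ext_iff] at h
  · -- detection states in `Q` ⇒ AE-robust recoverability.
    intro hQd
    have hgoal : detStates f x0 XS Scv ⊆ recSet f Suc XR (vulnStates f Scv ∪ XUS) := by
      set R : Set X := {z | ∃ w, runFrom (subStep (grStep f XS Scv) Q) (grInit x0) w
          = some ((none : Option X), z)} with hRdef
      have hRQ : ∀ z ∈ R, ((none : Option X), z) ∈ Q := by
        rintro z ⟨w, hw⟩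
        rcases runFrom_subStep_mem hw with h | h
        · exact h
        · simp [grInit, Prod.ext_iff] at h
      have hRbad : R ⊆ (vulnStates f Scv ∪ XUS)ᶜ := by
        rintro z ⟨w, hw⟩
        have hL : w ∈ SRLang f x0 XS Scv Q := Option.isSome_iff_exists.mpr ⟨_, hw⟩
        obtain ⟨q', hq'⟩ := Option.isSome_iff_exists.mp (hsafe hL)
        have e1 := runFrom_subStep_some hq'
        have e2 := runFrom_subStep_some hw
        rw [e2] at e1
        obtain rfl := Option.some.inj e1
        rcases runFrom_subStep_mem hq' with h | h
        · intro hbad; exact h ⟨rfl, hbad⟩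
        · simp [grInit, Prod.ext_iff] at h
      have hRuc : ∀ z ∈ R, ∀ e ∈ Suc, ∀ y, f z e = some y → y ∈ R := by
        rintro z ⟨w, hw⟩ e he y hf
        have hzQ : ((none : Option X), z) ∈ Q := hRQ z ⟨w, hw⟩
        have hg : grStep f XS Scv ((none : Option X), z) (Sum.inl e)
            = some ((none : Option X), y) := by
          rw [grStep_post, gaStep_inl, hf]; rfl
        have hyQ := hQ.controllable _ hzQ e he _ hg
        refine ⟨w ++ [Sum.inl e], ?_⟩
        rw [runFrom_append, hw, Option.bind_some, runFrom_one]
        exact subStep_eq hg hzQ hyQ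
      have hRrun : ∀ (u : List E), (∀ e ∈ u, e ∈ Suc) →
          ∀ z ∈ R, ∀ y, runFrom f z u = some y → y ∈ R := by
        intro u
        induction u with
        | nil => intro _ z hz y hy; obtain rfl := Option.some.inj hy; exact hz
        | cons e u ih =>
            intro hu z hz y hy
            rw [runFrom_cons] at hy
            cases hf : f z e with
            | none => rw [hf] at hy; simp at hy
            | some m =>
                rw [hf] at hy
                simp only [Option.bind_some] at hy
                exact ih (fun e' he' => hu e' (List.mem_cons_of_mem _ he')) m
                  (hRuc z hz e (hu e List.mem_cons_self) m hf) y hy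
      have hRpath : ∀ z ∈ R, ∃ r, IsRecoveryPath f Suc XR (vulnStates f Scv ∪ XUS) R z r := by
        intro z hz
        have hzQ := hRQ z hz
        obtain ⟨w0, hw0⟩ := hz
        obtain ⟨w, q, hwq, hq1, hq2⟩ := hnb _ hzQ rfl
        have hgw := runFrom_subStep_some hwq
        have hpost := runFrom_grStep_post' hgw
        have hmid : ∀ t, t <+: List.map (Sum.elim id id) w →
            ∀ y, runFrom f z t = some y → y ∈ R := by
          intro t ht y hy
          obtain ⟨wt, hwt, rfl⟩ := prefix_map ht
          obtain ⟨wt2, rfl⟩ := hwt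
          obtain ⟨m, hm, -⟩ := run_prefix hwq
          have hgm := runFrom_subStep_some hm
          have hpm := runFrom_grStep_post' hgm
          obtain ⟨m1, m2⟩ := m
          obtain rfl : m1 = none := hpm.1
          have h2 := hpm.2
          rw [hy] at h2
          obtain rfl := Option.some.inj h2
          refine ⟨w0 ++ wt, ?_⟩
          rw [runFrom_append, hw0, Option.bind_some]
          exact hm
        refine ⟨List.map (Sum.elim id id) w, ⟨q.2, hq2, hpost.2⟩, ?_, ?_, ?_⟩
        · intro t ht y hy
          exact hRbad (hmid t ht y hy)
        · intro t ht u hu y hy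
          obtain ⟨m, hm1, hm2⟩ := run_prefix hy
          exact hRbad (hRrun u hu m (hmid t ht m hm1) y hm2)
        · intro t ht e he y hy _
          obtain ⟨m, hm1, hm2⟩ := run_prefix hy
          rw [runFrom_one] at hm2
          exact hRuc m (hmid t ht m hm1) e he y hm2
      have hRrec : R ⊆ recSet f Suc XR (vulnStates f Scv ∪ XUS) := mem_recSet hRbad hRpath
      intro x hx
      obtain ⟨s, σ, xn, hxn, hstep, hfull⟩ := det_decomp hx
      obtain ⟨hsr, hsrQ⟩ := hQlang s xn hxn
      have hxQ : ((none : Option X), x) ∈ Q := hQd x hx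
      refine hRrec ⟨embed s ++ [Sum.inr σ], ?_⟩
      rw [runFrom_append, hsr, Option.bind_some, runFrom_one]
      exact subStep_eq hstep hsrQ hxQ
    exact hgoal
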